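/- For every integer k ≥ 0, as formal power series in q, Σ_{n≥0} p(n) q^n = Σ_{i≥0} q^{i(i+k)} / ((q;q)_{i+k} (q;q)_i), where the right-hand side converges coefficientwise (the term for index i has lowest degree i(i+k)). -/

import Mathlib

/-- `l` is a partition of `n`: a nonincreasing list of positive integers summing to `n`. -/
noncomputable def IsPartitionOf (n : ℕ) (l : List ℕ) : Prop :=
  l.Pairwise (· ≥ ·) ∧ (∀ x ∈ l, 0 < x) ∧ l.sum = n

/-- The partition `l` has a `k`-fixed point: `λ_i = i + k` for some (1-indexed) index `i`. -/
noncomputable def HasKFixedPoint (k : ℤ) (l : List ℕ) : Prop :=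
  ∃ i : Fin l.length, (l.get i : ℤ) = (i.val : ℤ) + 1 + k

/-- `f_k(n)`: the number of partitions of `n` with a `k`-fixed point. -/
noncomputable def fk (k : ℤ) (n : ℕ) : ℕ :=
  {l : List ℕ | IsPartitionOf n l ∧ HasKFixedPoint k l}.ncard

/-- `g_k(n)`: the number of partitions of `n` without a `k`-fixed point. -/
noncomputable def gk (k : ℤ) (n : ℕ) : ℕ :=
  {l : List ℕ | IsPartitionOf n l ∧ ¬ HasKFixedPoint k l}.ncard

/-- `mex_j(l)`: the smallest integer greater than `j` that is not a part of `l`. -/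
noncomputable def mexJ (j : ℕ) (l : List ℕ) : ℕ := sInf {m : ℕ | j < m ∧ m ∉ l}

/-- Dyson's crank of a partition. -/
noncomputable def crank (l : List ℕ) : ℤ :=
  if l.count 1 = 0 then (l.headI : ℤ)
  else ((l.filter (fun x => l.count 1 < x)).length : ℤ) - (l.count 1 : ℤ)

/-- `M(m,n)`: the number of partitions of `n` with crank `m`. -/
noncomputable def M (m : ℤ) (n : ℕ) : ℕ :=
  {l : List ℕ | IsPartitionOf n l ∧ crank l = m}.ncard

/-- `p(n)`: the number of partitions of `n`. -/
noncomputable def partitionCount (n : ℕ) : ℕ := {l : List ℕ | IsPartitionOf n l}.ncard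

/-- `p(n,j)`: the number of partitions of `n` into at most `j` parts. -/
noncomputable def pAtMost (n : ℕ) (j : ℤ) : ℕ :=
  {l : List ℕ | IsPartitionOf n l ∧ (l.length : ℤ) ≤ j}.ncard

/-- `g'_{-k}(n)`: partitions of `n` with at least `k` parts and no `-k`-fixed point. -/
noncomputable def gneg (k : ℕ) (n : ℕ) : ℕ :=
  {l : List ℕ | IsPartitionOf n l ∧ k ≤ l.length ∧
    ∀ i : Fin l.length, (l.get i : ℤ) ≠ (i.val : ℤ) + 1 - k}.ncard

/-- `(q;q)_i = ∏_{m=1}^{i} (1 - q^m)` as a formal power series over `ℤ`. -/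
noncomputable def qPoch (i : ℕ) : PowerSeries ℤ :=
  ∏ m ∈ Finset.range i, (1 - PowerSeries.X ^ (m + 1))

open PowerSeries Finset YoungDiagram



noncomputable def GserL (t : ℕ) : PowerSeries ℤ := PowerSeries.mk fun m => if t ∣ m then 1 else 0

lemma one_sub_X_pow_mul_G (t : ℕ) (ht : 0 < t) : (1 - (X : PowerSeries ℤ) ^ t) * GserL t = 1 := by
  ext n
  rw [sub_mul, one_mul, map_sub]
  rcases lt_or_ge n t with h | h
  · rw [coeff_X_pow_mul' , if_neg (by omega)]
    rcases Nat.eq_zero_or_pos n with rfl | hn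
    · simp [GserL, coeff_mk]
    · have : ¬ t ∣ n := fun hd => absurd (Nat.le_of_dvd hn hd) (by omega)
      simp [GserL, coeff_mk, this, coeff_one, Nat.pos_iff_ne_zero.mp hn]
  · obtain ⟨d, rfl⟩ := Nat.exists_eq_add_of_le h
    rw [show t + d = d + t by omega, coeff_X_pow_mul]
    have h1 : t ∣ d + t ↔ t ∣ d := by
      constructor
      · intro hd; exact (Nat.dvd_add_left dvd_rfl).mp hd
      · intro hd; exact Nat.dvd_add hd dvd_rfl
    have hne : d + t ≠ 0 := by omega
    simp [GserL, coeff_mk, h1, coeff_one, hne]; omega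

lemma constantCoeff_qPoch (j : ℕ) : constantCoeff (qPoch j) = 1 := by
  rw [qPoch, map_prod]
  apply Finset.prod_eq_one
  intro m _
  simp

lemma qPoch_mul_prodG (j : ℕ) : qPoch j * ∏ m ∈ range j, GserL (m+1) = 1 := by
  rw [qPoch, ← Finset.prod_mul_distrib]
  apply Finset.prod_eq_one
  intro m _
  exact one_sub_X_pow_mul_G (m+1) (Nat.succ_pos m)

lemma invOfUnit_qPoch (j : ℕ) : (qPoch j).invOfUnit 1 = ∏ m ∈ range j, GserL (m+1) := by
  have h1 : qPoch j * (qPoch j).invOfUnit 1 = 1 :=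
    PowerSeries.mul_invOfUnit _ _ (by rw [constantCoeff_qPoch]; rfl)
  calc (qPoch j).invOfUnit 1 = (qPoch j).invOfUnit 1 * (qPoch j * ∏ m ∈ range j, GserL (m+1)) := by
        rw [qPoch_mul_prodG, mul_one]
    _ = (∏ m ∈ range j, GserL (m+1)) * (qPoch j * (qPoch j).invOfUnit 1) := by ring
    _ = _ := by rw [h1, mul_one]

lemma coeff_inv_qPoch (j m : ℕ) :
    PowerSeries.coeff m ((qPoch j).invOfUnit 1) =
      (((((range j).finsuppAntidiag m)).filter (fun l => ∀ t ∈ range j, (t+1) ∣ l t)).card : ℤ) := by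
  rw [invOfUnit_qPoch, PowerSeries.coeff_prod]
  rw [← Finset.sum_boole]
  apply Finset.sum_congr rfl
  intro l _
  rw [← Finset.prod_boole]
  apply Finset.prod_congr rfl
  intro t _
  simp [GserL, coeff_mk]




/-- partitions of `m` with all parts `≤ j` -/
def Bset (j m : ℕ) : Set (List ℕ) := {l | IsPartitionOf m l ∧ ∀ x ∈ l, x ≤ j}

noncomputable def psiF (j : ℕ) (w : List ℕ) : ℕ →₀ ℕ :=
  Finsupp.onFinset (range j) (fun t => if t < j then (t+1) * w.count (t+1) else 0)
    (fun t h => by by_cases ht : t < j <;> simp_all)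

lemma psi_apply (j : ℕ) (w : List ℕ) (t : ℕ) (ht : t < j) :
    psiF j w t = (t+1) * w.count (t+1) := by simp [psiF, ht]

lemma psi_apply_of_ge (j : ℕ) (w : List ℕ) (t : ℕ) (ht : j ≤ t) :
    psiF j w t = 0 := by simp [psiF, Nat.not_lt.mpr ht]

lemma sum_count_mul (j : ℕ) (w : List ℕ) (hw : ∀ x ∈ w, 0 < x ∧ x ≤ j) :
    ∑ t ∈ range j, (t+1) * w.count (t+1) = w.sum := by
  induction w with
  | nil => simp
  | cons x w' ih =>
    have hx := hw x (by simp)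
    have hw' : ∀ y ∈ w', 0 < y ∧ y ≤ j := fun y hy => hw y (by simp [hy])
    simp only [List.count_cons, List.sum_cons, beq_iff_eq]
    have : ∀ t ∈ range j, (t+1) * (w'.count (t+1) + if x = t+1 then 1 else 0)
        = (t+1) * w'.count (t+1) + (if x = t+1 then t+1 else 0) := by
      intro t _; by_cases h : x = t+1 <;> simp [h, Nat.mul_add]
    rw [Finset.sum_congr rfl this, Finset.sum_add_distrib, ih hw']
    have : ∑ t ∈ range j, (if x = t+1 then t+1 else 0) = x := by
      rw [Finset.sum_eq_single (x-1)]
      · have : x = (x-1)+1 := by omega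
        simp [← this]
      · intro b _ hb
        have : x ≠ b + 1 := by omega
        simp [this]
      · intro h
        exfalso; exact h (mem_range.mpr (by omega))
    omega

lemma psi_mem (j m : ℕ) (w : List ℕ) (hw : w ∈ Bset j m) :
    psiF j w ∈ ((range j).finsuppAntidiag m).filter (fun l => ∀ t ∈ range j, (t+1) ∣ l t) := by
  obtain ⟨⟨hs, hpos, hsum⟩, hle⟩ := hw
  rw [mem_filter, mem_finsuppAntidiag]
  refine ⟨⟨?_, ?_⟩, ?_⟩
  · rw [Finset.sum_congr rfl (fun t ht => psi_apply j w t (mem_range.mp ht))]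
    rw [sum_count_mul j w (fun x hx => ⟨hpos x hx, hle x hx⟩), hsum]
  · intro t ht
    simp only [Finsupp.mem_support_iff] at ht
    by_contra h
    exact ht (psi_apply_of_ge j w t (Nat.le_of_not_lt (fun hlt => h (mem_range.mpr hlt))))
  · intro t ht
    rw [psi_apply j w t (mem_range.mp ht)]
    exact Dvd.intro _ rfl

lemma psi_inj (j m : ℕ) : Set.InjOn (psiF j) (Bset j m) := by
  intro w₁ h₁ w₂ h₂ he
  obtain ⟨⟨hs₁, hpos₁, _⟩, hle₁⟩ := h₁
  obtain ⟨⟨hs₂, hpos₂, _⟩, hle₂⟩ := h₂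
  refine List.Perm.eq_of_pairwise' hs₁ hs₂ (List.perm_iff_count.mpr fun a => ?_)
  rcases Nat.eq_zero_or_pos a with rfl | ha
  · rw [List.count_eq_zero.mpr (fun h => absurd (hpos₁ 0 h) (lt_irrefl 0)),
      List.count_eq_zero.mpr (fun h => absurd (hpos₂ 0 h) (lt_irrefl 0))]
  rcases Nat.lt_or_ge (a-1) j with haj | haj
  · have e1 := psi_apply j w₁ (a-1) haj
    have e2 := psi_apply j w₂ (a-1) haj
    have : a - 1 + 1 = a := by omega
    rw [this] at e1 e2
    have := congrArg (fun f => f (a-1)) he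
    rw [e1, e2] at this
    exact Nat.eq_of_mul_eq_mul_left (by omega) this
  · rw [List.count_eq_zero.mpr (fun h => by have := hle₁ a h; omega),
      List.count_eq_zero.mpr (fun h => by have := hle₂ a h; omega)]

lemma psi_surj (j m : ℕ) :
    Set.SurjOn (psiF j) (Bset j m)
      (((range j).finsuppAntidiag m).filter (fun l => ∀ t ∈ range j, (t+1) ∣ l t)) := by
  intro l hl
  rw [Finset.coe_filter, Set.mem_setOf_eq, mem_finsuppAntidiag] at hl
  obtain ⟨⟨hsum, hsupp⟩, hdvd⟩ := hl
  set M : Multiset ℕ := ∑ t ∈ range j, Multiset.replicate (l t / (t+1)) (t+1) with hM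
  set w : List ℕ := (Multiset.sort M (· ≤ ·)).reverse with hw
  have hcoe : (↑w : Multiset ℕ) = M := by
    rw [hw, Multiset.coe_reverse, Multiset.sort_eq]
  have hcount : ∀ a, w.count a = Multiset.count a M := by
    intro a; rw [← Multiset.coe_count, hcoe]
  have hcountM : ∀ t, t < j → Multiset.count (t+1) M = l t / (t+1) := by
    intro t ht
    rw [hM, Multiset.count_sum']
    rw [Finset.sum_eq_single t]
    · simp [Multiset.count_replicate]
    · intro b _ hb
      rw [Multiset.count_replicate, if_neg (by omega)]
    · intro h; exact absurd (mem_range.mpr ht) h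
  have hmemM : ∀ a ∈ M, 0 < a ∧ a ≤ j := by
    intro a ha
    rw [hM] at ha
    rw [Multiset.mem_sum] at ha
    obtain ⟨t, ht, ha⟩ := ha
    rw [Multiset.eq_of_mem_replicate ha]
    exact ⟨Nat.succ_pos t, mem_range.mp ht⟩
  have hmem : ∀ a ∈ w, 0 < a ∧ a ≤ j := by
    intro a ha
    exact hmemM a (by rw [← hcoe]; exact_mod_cast ha)
  have hsorted : w.Pairwise (· ≥ ·) := by
    rw [hw, List.pairwise_reverse]
    exact Multiset.pairwise_sort M (· ≤ ·)
  have hwsum : w.sum = m := by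
    have : w.sum = M.sum := by rw [← hcoe]; rfl
    rw [this, hM]
    have : (∑ t ∈ range j, Multiset.replicate (l t / (t+1)) (t+1)).sum
        = ∑ t ∈ range j, (Multiset.replicate (l t / (t+1)) (t+1)).sum := by
      exact map_sum Multiset.sumAddMonoidHom _ _
    rw [this]
    rw [← hsum]
    apply Finset.sum_congr rfl
    intro t ht
    rw [Multiset.sum_replicate, smul_eq_mul]
    exact Nat.div_mul_cancel (hdvd t ht)
  refine ⟨w, ⟨⟨hsorted, fun x hx => (hmem x hx).1, hwsum⟩, fun x hx => (hmem x hx).2⟩, ?_⟩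
  ext t
  rcases Nat.lt_or_ge t j with ht | ht
  · rw [psi_apply j w t ht, hcount, hcountM t ht, Nat.mul_div_cancel' (hdvd t (mem_range.mpr ht))]
  · rw [psi_apply_of_ge j w t ht]
    by_contra h
    have := hsupp (Finsupp.mem_support_iff.mpr (fun he => h he.symm))
    rw [mem_range] at this; omega

lemma ncard_Bset (j m : ℕ) :
    (Bset j m).ncard
      = ((((range j).finsuppAntidiag m)).filter (fun l => ∀ t ∈ range j, (t+1) ∣ l t)).card := by
  have hbij : Set.BijOn (psiF j) (Bset j m)
      (((range j).finsuppAntidiag m).filter (fun l => ∀ t ∈ range j, (t+1) ∣ l t)) :=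
    ⟨fun w hw => psi_mem j m w hw, psi_inj j m, psi_surj j m⟩
  rw [← Set.ncard_coe_finset, ← hbij.image_eq, Set.ncard_image_of_injOn (psi_inj j m)]




def Cset (j m : ℕ) : Set (List ℕ) := {l | IsPartitionOf m l ∧ l.length ≤ j}

lemma cardEqSumRowLensL (μ : YoungDiagram) : μ.card = ∑ i ∈ range (μ.colLen 0), μ.rowLen i := by
  show μ.cells.card = _
  rw [Finset.card_eq_sum_card_fiberwise (f := Prod.fst) (t := range (μ.colLen 0))]
  · apply Finset.sum_congr rfl
    intro i _
    rw [rowLen_eq_card]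
    rfl
  · intro c hc
    rw [Finset.mem_coe, mem_range, ← mem_iff_lt_colLen]
    exact μ.up_left_mem le_rfl (Nat.zero_le _) hc

lemma rowLens_sum_eq_card (μ : YoungDiagram) : μ.rowLens.sum = μ.card := by
  rw [cardEqSumRowLensL, YoungDiagram.rowLens]
  rfl

lemma transpose_card_eq (μ : YoungDiagram) : μ.transpose.card = μ.card := by
  simp [YoungDiagram.transpose, YoungDiagram.card]

noncomputable def conjL (w : List ℕ) : List ℕ :=
  if h : w.Pairwise (· ≥ ·) ∧ ∀ x ∈ w, 0 < x then
    ((YoungDiagram.ofRowLens w h.1.sortedGE).transpose).rowLens else []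

lemma conj_eq {w : List ℕ} (hs : w.Pairwise (· ≥ ·)) (hp : ∀ x ∈ w, 0 < x) :
    conjL w = ((YoungDiagram.ofRowLens w hs.sortedGE).transpose).rowLens := by
  rw [conjL, dif_pos ⟨hs, hp⟩]

lemma conj_sorted {w : List ℕ} (hs : w.Pairwise (· ≥ ·)) (hp : ∀ x ∈ w, 0 < x) :
    (conjL w).Pairwise (· ≥ ·) := by
  rw [conj_eq hs hp]; exact (rowLens_sorted _).pairwise

lemma conj_pos {w : List ℕ} (hs : w.Pairwise (· ≥ ·)) (hp : ∀ x ∈ w, 0 < x) :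
    ∀ x ∈ conjL w, 0 < x := by
  rw [conj_eq hs hp]; exact pos_of_mem_rowLens _

lemma conj_sum {w : List ℕ} (hs : w.Pairwise (· ≥ ·)) (hp : ∀ x ∈ w, 0 < x) :
    (conjL w).sum = w.sum := by
  rw [conj_eq hs hp, rowLens_sum_eq_card, transpose_card_eq, ← rowLens_sum_eq_card,
    rowLens_ofRowLens_eq_self hp]

lemma conj_conj {w : List ℕ} (hs : w.Pairwise (· ≥ ·)) (hp : ∀ x ∈ w, 0 < x) :
    conjL (conjL w) = w := by
  rw [conj_eq hs hp, conj_eq (rowLens_sorted _).pairwise (pos_of_mem_rowLens _),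
    ofRowLens_to_rowLens_eq_self, transpose_transpose, rowLens_ofRowLens_eq_self hp]

lemma rowLen_zero_ofRowLens {w : List ℕ} (hs : w.Pairwise (· ≥ ·)) (hp : ∀ x ∈ w, 0 < x) :
    (YoungDiagram.ofRowLens w hs.sortedGE).rowLen 0 = w.headI := by
  cases w with
  | nil =>
    show _ = 0
    have h0 : (YoungDiagram.ofRowLens ([] : List ℕ) hs.sortedGE).colLen 0 = 0 := by
      rw [← length_rowLens, rowLens_ofRowLens_eq_self (by simp)]
      rfl
    by_contra h
    have : (0, 0) ∈ YoungDiagram.ofRowLens ([] : List ℕ) hs.sortedGE := by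
      rw [mem_iff_lt_rowLen]; omega
    rw [mem_iff_lt_colLen, h0] at this; omega
  | cons a t =>
    have := rowLen_ofRowLens (w := a :: t) (hw := hs.sortedGE) ⟨0, by simp⟩
    simpa using this

lemma length_conj {w : List ℕ} (hs : w.Pairwise (· ≥ ·)) (hp : ∀ x ∈ w, 0 < x) :
    (conjL w).length = (YoungDiagram.ofRowLens w hs.sortedGE).rowLen 0 := by
  rw [conj_eq hs hp, length_rowLens, colLen_transpose]

lemma length_conj_le_iff {w : List ℕ} (hs : w.Pairwise (· ≥ ·)) (hp : ∀ x ∈ w, 0 < x) {j : ℕ} :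
    (conjL w).length ≤ j ↔ ∀ x ∈ w, x ≤ j := by
  rw [length_conj hs hp, rowLen_zero_ofRowLens hs hp]
  cases w with
  | nil => simp
  | cons a t =>
    simp only [List.headI]
    constructor
    · intro h x hx
      rcases List.mem_cons.mp hx with rfl | hx
      · exact h
      · have : a ≥ x := (List.pairwise_cons.mp hs).1 x hx
        omega
    · intro h; exact h a (by simp)

lemma conj_bijOn (j m : ℕ) : Set.BijOn conjL (Bset j m) (Cset j m) := by
  constructor
  · rintro w ⟨⟨hs, hp, hsum⟩, hle⟩
    exact ⟨⟨conj_sorted hs hp, conj_pos hs hp, by rw [conj_sum hs hp, hsum]⟩,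
      (length_conj_le_iff hs hp).mpr hle⟩
  constructor
  · rintro w₁ ⟨⟨hs₁, hp₁, _⟩, _⟩ w₂ ⟨⟨hs₂, hp₂, _⟩, _⟩ he
    rw [← conj_conj hs₁ hp₁, ← conj_conj hs₂ hp₂, he]
  · rintro c ⟨⟨hs, hp, hsum⟩, hlen⟩
    refine ⟨conjL c, ⟨⟨conj_sorted hs hp, conj_pos hs hp, by rw [conj_sum hs hp, hsum]⟩, ?_⟩,
      conj_conj hs hp⟩
    intro x hx
    have h2 := (length_conj_le_iff (conj_sorted hs hp) (conj_pos hs hp) (j := c.length))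
    rw [conj_conj hs hp] at h2
    exact le_trans (h2.mp le_rfl x hx) hlen

lemma ncard_Bset_eq_ncard_Cset (j m : ℕ) : (Bset j m).ncard = (Cset j m).ncard := by
  rw [← (conj_bijOn j m).image_eq, Set.ncard_image_of_injOn (conj_bijOn j m).injOn]





def durf (k : ℕ) (l : List ℕ) : ℕ :=
  Nat.find (p := fun j => ¬(j < l.length ∧ j + 1 + k ≤ l.getD j 0)) ⟨l.length, by simp⟩

lemma durf_eq_iff {k i : ℕ} {l : List ℕ} : durf k l = i ↔
    (¬(i < l.length ∧ i + 1 + k ≤ l.getD i 0)) ∧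
      ∀ t < i, t < l.length ∧ t + 1 + k ≤ l.getD t 0 := by
  rw [durf, Nat.find_eq_iff]
  simp only [not_not]

lemma sumMapAddL (c : ℕ) (l : List ℕ) : (l.map (fun x => x + c)).sum = l.sum + l.length * c := by
  induction l with
  | nil => simp
  | cons x t ih => simp only [List.map_cons, List.sum_cons, List.length_cons, ih]; ring

lemma recombL (c : ℕ) (t : List ℕ) (hs : t.Pairwise (· ≥ ·)) (hge : ∀ x ∈ t, c ≤ x) :
    ((((t.map (fun x => x - c)).filter (fun x => 0 < x)).map (fun x => x + c))
      ++ List.replicate (t.length - ((t.map (fun x => x - c)).filter (fun x => 0 < x)).length) c)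
      = t := by
  induction t with
  | nil => simp
  | cons x t' ih =>
    have hs' : t'.Pairwise (· ≥ ·) := (List.pairwise_cons.mp hs).2
    have hxt : ∀ y ∈ t', y ≤ x := (List.pairwise_cons.mp hs).1
    have hge' : ∀ y ∈ t', c ≤ y := fun y hy => hge y (List.mem_cons_of_mem _ hy)
    by_cases hc : c < x
    · have hd : (decide (0 < x - c)) = true := by simp; omega
      simp only [List.map_cons, List.filter_cons, hd, if_true]
      simp only [List.map_cons, List.length_cons, List.cons_append]
      rw [show x - c + c = x by omega]
      have hlen : (((t'.map (fun x => x - c)).filter (fun x => 0 < x))).length ≤ t'.length :=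
        le_trans (List.length_filter_le _ _) (by simp)
      rw [show t'.length + 1 - ((((t'.map (fun x => x - c)).filter (fun x => 0 < x))).length + 1)
        = t'.length - (((t'.map (fun x => x - c)).filter (fun x => 0 < x))).length by omega]
      rw [ih hs' hge']
    · have hxc : x = c := le_antisymm (by omega) (hge x (by simp))
      have hall : ∀ y ∈ x :: t', y = c := by
        intro y hy
        rcases List.mem_cons.mp hy with rfl | hy
        · exact hxc
        · have h1 := hxt y hy; have h2 := hge' y hy; omega
      have hfil : ((x::t').map (fun x => x - c)).filter (fun x => 0 < x) = [] := by
        rw [List.filter_eq_nil_iff]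
        intro a ha
        rw [List.mem_map] at ha
        obtain ⟨y, hy, rfl⟩ := ha
        have := hall y hy
        simp [this]
      rw [hfil]
      simp only [List.nil_append, List.length_nil, Nat.sub_zero, List.map_nil]
      symm
      rw [List.eq_replicate_iff]
      exact ⟨rfl, hall⟩

def phiD (i c : ℕ) (μ ν : List ℕ) : List ℕ :=
  (μ.map (fun x => x + c)) ++ List.replicate (i - μ.length) c ++ ν

def muOf (c i : ℕ) (l : List ℕ) : List ℕ :=
  ((l.take i).map (fun x => x - c)).filter (fun x => 0 < x)

def nuOf (i : ℕ) (l : List ℕ) : List ℕ := l.drop i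

section phiD
variable {i c b a : ℕ} {μ ν : List ℕ}
  (hμs : μ.Pairwise (· ≥ ·)) (hμp : ∀ x ∈ μ, 0 < x) (hμl : μ.length ≤ i)
  (hνs : ν.Pairwise (· ≥ ·)) (hνp : ∀ x ∈ ν, 0 < x) (hνb : ∀ x ∈ ν, x ≤ c)

include hμl in
lemma phi_block_len : ((μ.map (fun x => x + c)) ++ List.replicate (i - μ.length) c).length = i := by
  simp; omega

include hμl in
lemma phi_take : (phiD i c μ ν).take i = (μ.map (fun x => x + c)) ++ List.replicate (i - μ.length) c := by
  rw [phiD, List.take_left' (phi_block_len hμl)]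

include hμl in
lemma phi_drop : (phiD i c μ ν).drop i = ν := by
  rw [phiD, List.drop_left' (phi_block_len hμl)]

include hμl in
lemma phi_length : (phiD i c μ ν).length = i + ν.length := by
  simp [phiD]; omega

lemma memBlockL (x : ℕ) (hx : x ∈ (μ.map (fun y => y + c)) ++ List.replicate (i - μ.length) c) :
    c ≤ x := by
  rcases List.mem_append.mp hx with h | h
  · obtain ⟨y, _, rfl⟩ := List.mem_map.mp h
    omega
  · rw [List.eq_of_mem_replicate h]

include hμs hνs hνb in
lemma phi_sorted : (phiD i c μ ν).Pairwise (· ≥ ·) := by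
  rw [phiD, List.append_assoc, List.pairwise_append]
  refine ⟨?_, ?_, ?_⟩
  · exact hμs.map _ (fun x y h => by omega)
  · rw [List.pairwise_append]
    refine ⟨List.pairwise_replicate.mpr (Or.inr le_rfl), hνs, ?_⟩
    intro x hx y hy
    rw [List.eq_of_mem_replicate hx]
    exact hνb y hy
  · intro x hx y hy
    obtain ⟨z, _, rfl⟩ := List.mem_map.mp hx
    rcases List.mem_append.mp hy with h | h
    · rw [List.eq_of_mem_replicate h]; omega
    · have := hνb y h; omega

include hμp hνp in
lemma phi_pos (hc : 0 < i → 0 < c) : ∀ x ∈ phiD i c μ ν, 0 < x := by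
  intro x hx
  rw [phiD, List.append_assoc, List.mem_append] at hx
  rcases hx with h | h
  · obtain ⟨z, hz, rfl⟩ := List.mem_map.mp h
    have := hμp z hz; omega
  · rcases List.mem_append.mp h with h | h
    · rcases Nat.eq_zero_or_pos (i - μ.length) with he | he
      · rw [he] at h; simp at h
      · rw [List.eq_of_mem_replicate h]; exact hc (by omega)
    · exact hνp x h

include hμl in
lemma phi_sum : (phiD i c μ ν).sum = μ.sum + i * c + ν.sum := by
  simp only [phiD, List.sum_append, sumMapAddL, List.sum_replicate, smul_eq_mul]
  have h : μ.length * c + (i - μ.length) * c = i * c := by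
    rw [← Nat.add_mul, show μ.length + (i - μ.length) = i by omega]
  omega

include hμl hνb in
lemma phi_durf (k : ℕ) (hck : c = i + k) : durf k (phiD i c μ ν) = i := by
  rw [durf_eq_iff]
  have hlen := phi_length (μ := μ) (ν := ν) (c := c) hμl
  have hbl := phi_block_len (μ := μ) (c := c) hμl
  constructor
  · rintro ⟨h1, h2⟩
    have hν : 0 < ν.length := by omega
    have he : (phiD i c μ ν).getD i 0 = ν.getD 0 0 := by
      rw [phiD, List.getD_append_right _ _ _ _ (by omega), hbl, Nat.sub_self]
    rw [he] at h2
    have hmem : ν.getD 0 0 ∈ ν := by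
      rw [List.getD_eq_getElem _ _ hν]
      exact List.getElem_mem hν
    have := hνb _ hmem
    omega
  · intro t ht
    refine ⟨by omega, ?_⟩
    have h1 : (phiD i c μ ν).getD t 0
        = ((μ.map (fun x => x + c)) ++ List.replicate (i - μ.length) c).getD t 0 := by
      rw [phiD, List.getD_append _ _ _ _ (by omega)]
    have h2 : ((μ.map (fun x => x + c)) ++ List.replicate (i - μ.length) c).getD t 0
        ∈ (μ.map (fun x => x + c)) ++ List.replicate (i - μ.length) c := by
      rw [List.getD_eq_getElem _ _ (by omega)]
      exact List.getElem_mem (by omega)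
    have := memBlockL _ (h1 ▸ h2 : _)
    omega

include hμp hμl in
lemma phi_muOf : muOf c i (phiD i c μ ν) = μ := by
  rw [muOf, phi_take hμl, List.map_append, List.filter_append, List.map_map]
  have h1 : (μ.map ((fun x => x - c) ∘ (fun x => x + c))) = μ := by
    rw [show ((fun x => x - c) ∘ (fun x => x + c)) = fun x : ℕ => x by funext x; simp]
    exact List.map_id μ
  rw [h1]
  have h2 : List.filter (fun x => 0 < x) μ = μ := by
    rw [List.filter_eq_self]
    intro x hx
    simpa using hμp x hx
  have h3 : List.filter (fun x => 0 < x)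
      ((List.replicate (i - μ.length) c).map (fun x => x - c)) = [] := by
    rw [List.filter_eq_nil_iff]
    intro x hx
    rw [List.mem_map] at hx
    obtain ⟨y, hy, rfl⟩ := hx
    rw [List.eq_of_mem_replicate hy]
    simp
  rw [h2, h3, List.append_nil]

end phiD

lemma sorted_getElem_mono {l : List ℕ} (hs : l.Pairwise (· ≥ ·)) {s t : ℕ} (h : s ≤ t)
    (ht : t < l.length) : l[t] ≤ l[s] := by
  rcases Nat.lt_or_ge s t with hlt | hge
  · exact List.pairwise_iff_get.mp hs ⟨s, by omega⟩ ⟨t, ht⟩ hlt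
  · have : s = t := by omega
    subst this; exact le_rfl

lemma durf_le_length {k i : ℕ} {l : List ℕ} (hd : durf k l = i) : i ≤ l.length := by
  obtain ⟨_, hlt⟩ := durf_eq_iff.mp hd
  rcases Nat.eq_zero_or_pos i with rfl | hi
  · exact Nat.zero_le _
  · have := (hlt (i-1) (by omega)).1
    omega

lemma durf_take_ge {k i : ℕ} {l : List ℕ} (hs : l.Pairwise (· ≥ ·)) (hd : durf k l = i) :
    ∀ x ∈ l.take i, i + k ≤ x := by
  intro x hx
  obtain ⟨hns, hlt⟩ := durf_eq_iff.mp hd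
  obtain ⟨s, hsl, rfl⟩ := List.mem_iff_getElem.mp hx
  have hsi : s < i := by
    have := List.length_take (i := i) (l := l) ▸ hsl
    omega
  have hile := durf_le_length hd
  rw [List.getElem_take]
  have h1 := (hlt (i-1) (by omega)).2
  rw [List.getD_eq_getElem _ _ (by omega)] at h1
  have h2 : l[i-1]'(by omega) ≤ l[s]'(by omega) := sorted_getElem_mono hs (by omega) (by omega)
  omega

lemma durf_drop_le {k i : ℕ} {l : List ℕ} (hs : l.Pairwise (· ≥ ·)) (hd : durf k l = i) :
    ∀ x ∈ l.drop i, x ≤ i + k := by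
  intro x hx
  obtain ⟨hns, hlt⟩ := durf_eq_iff.mp hd
  obtain ⟨s, hsl, rfl⟩ := List.mem_iff_getElem.mp hx
  have hlen : s < l.length - i := by
    have := List.length_drop (i := i) (l := l) ▸ hsl
    omega
  rw [List.getElem_drop]
  have hil : i < l.length := by omega
  have h1 : l.getD i 0 = l[i] := List.getD_eq_getElem _ _ hil
  have h2 : ¬ (i + 1 + k ≤ l.getD i 0) := fun h => hns ⟨hil, h⟩
  rw [h1] at h2
  have h3 : l[i + s]'(by omega) ≤ l[i] := sorted_getElem_mono hs (by omega) (by omega)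
  omega

lemma muOf_length_le {c i : ℕ} {l : List ℕ} : (muOf c i l).length ≤ i := by
  rw [muOf]
  refine le_trans (List.length_filter_le _ _) ?_
  simp [List.length_take]

lemma muOf_sorted {c i : ℕ} {l : List ℕ} (hs : l.Pairwise (· ≥ ·)) :
    (muOf c i l).Pairwise (· ≥ ·) := by
  rw [muOf]
  exact ((List.Pairwise.sublist (List.take_sublist i l) hs).map _ (fun x y h => by omega)).filter _

lemma muOf_pos {c i : ℕ} {l : List ℕ} : ∀ x ∈ muOf c i l, 0 < x := by
  intro x hx
  have := List.of_mem_filter hx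
  simpa using this

lemma nuOf_sorted {i : ℕ} {l : List ℕ} (hs : l.Pairwise (· ≥ ·)) :
    (nuOf i l).Pairwise (· ≥ ·) := List.Pairwise.sublist (List.drop_sublist i l) hs

lemma decomp {k i n : ℕ} {l : List ℕ} (hl : IsPartitionOf n l) (hd : durf k l = i) :
    phiD i (i+k) (muOf (i+k) i l) (nuOf i l) = l := by
  obtain ⟨hs, hp, hsum⟩ := hl
  have hile := durf_le_length hd
  have htlen : (l.take i).length = i := by simp [List.length_take]; omega
  have hts : (l.take i).Pairwise (· ≥ ·) := List.Pairwise.sublist (List.take_sublist i l) hs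
  have hge := durf_take_ge hs hd
  have hrec := recombL (i+k) (l.take i) hts hge
  rw [phiD, muOf, nuOf]
  rw [show i - (((l.take i).map (fun x => x - (i+k))).filter (fun x => 0 < x)).length
    = (l.take i).length - (((l.take i).map (fun x => x - (i+k))).filter (fun x => 0 < x)).length
    by omega]
  rw [hrec]
  exact List.take_append_drop i l

lemma decomp_sum {k i n : ℕ} {l : List ℕ} (hl : IsPartitionOf n l) (hd : durf k l = i) :
    (muOf (i+k) i l).sum + i * (i+k) + (nuOf i l).sum = n := by
  have h1 := decomp hl hd
  have h2 := phi_sum (μ := muOf (i+k) i l) (ν := nuOf i l) (c := i+k) muOf_length_le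
  rw [h1, hl.2.2] at h2
  omega

def Dab (k n i a b : ℕ) : Set (List ℕ) :=
  {l | IsPartitionOf n l ∧ durf k l = i ∧ (nuOf i l).sum = a ∧ (muOf (i+k) i l).sum = b}

lemma durf_bijOn (k n i a b : ℕ) (h : b + i * (i+k) + a = n) :
    Set.BijOn (fun p : List ℕ × List ℕ => phiD i (i+k) p.1 p.2)
      ((Cset i b) ×ˢ (Bset (i+k) a)) (Dab k n i a b) := by
  constructor
  · rintro ⟨μ, ν⟩ hmem
    obtain ⟨⟨hμs, hμp, hμsum⟩, hμl⟩ : μ ∈ Cset i b := hmem.1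
    obtain ⟨⟨hνs, hνp, hνsum⟩, hνb⟩ : ν ∈ Bset (i+k) a := hmem.2
    show phiD i (i+k) μ ν ∈ Dab k n i a b
    refine ⟨⟨phi_sorted hμs hνs hνb, phi_pos hμp hνp (fun _ => by omega), ?_⟩,
      phi_durf hμl hνb k rfl, ?_, ?_⟩
    · rw [phi_sum hμl, hμsum, hνsum, h]
    · show ((phiD i (i+k) μ ν).drop i).sum = a
      rw [phi_drop hμl, hνsum]
    · rw [phi_muOf hμp hμl, hμsum]
  constructor
  · rintro ⟨μ₁, ν₁⟩ h1 ⟨μ₂, ν₂⟩ h2 he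
    obtain ⟨⟨hμs₁, hμp₁, _⟩, hμl₁⟩ : μ₁ ∈ Cset i b := h1.1
    obtain ⟨⟨hμs₂, hμp₂, _⟩, hμl₂⟩ : μ₂ ∈ Cset i b := h2.1
    have he' : phiD i (i+k) μ₁ ν₁ = phiD i (i+k) μ₂ ν₂ := he
    have hm : μ₁ = μ₂ := by
      rw [← phi_muOf hμp₁ hμl₁ (ν := ν₁), ← phi_muOf hμp₂ hμl₂ (ν := ν₂), he']
    have hn : ν₁ = ν₂ := by
      rw [← phi_drop hμl₁ (ν := ν₁) (c := i+k), ← phi_drop hμl₂ (ν := ν₂) (c := i+k), he']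
    exact Prod.ext hm hn
  · rintro l ⟨⟨hs, hp, hsum⟩, hd, ha, hb⟩
    refine ⟨(muOf (i+k) i l, nuOf i l), ⟨⟨⟨muOf_sorted hs, muOf_pos, hb⟩, muOf_length_le⟩,
      ⟨⟨nuOf_sorted hs, ?_, ha⟩, durf_drop_le hs hd⟩⟩, decomp ⟨hs, hp, hsum⟩ hd⟩
    intro x hx
    exact hp x (List.mem_of_mem_drop hx)

-- PART 5 test: finiteness + assembly (appended to pinned defs + parts later)


lemma length_le_sum' (l : List ℕ) (hp : ∀ x ∈ l, 0 < x) : l.length ≤ l.sum := by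
  induction l with
  | nil => simp
  | cons x t ih =>
    simp only [List.length_cons, List.sum_cons]
    have h1 := hp x (by simp)
    have h2 := ih (fun y hy => hp y (by simp [hy]))
    omega

lemma aset_finite (n : ℕ) : {l : List ℕ | IsPartitionOf n l}.Finite := by
  rw [← Set.finite_coe_iff]
  refine Finite.of_injective (fun x => (⟨(↑(x : List ℕ) : Multiset ℕ),
    fun hi => x.2.2.1 _ hi, by rw [Multiset.sum_coe]; exact x.2.2.2⟩ : Nat.Partition n)) ?_
  intro x y hxy
  have h : (↑(x : List ℕ) : Multiset ℕ) = ↑(y : List ℕ) := congrArg Nat.Partition.parts hxy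
  exact Subtype.ext (List.Perm.eq_of_pairwise' x.2.1 y.2.1 (Multiset.coe_eq_coe.mp h))

lemma coeff_inv_eq_B (j a : ℕ) :
    PowerSeries.coeff a ((qPoch j).invOfUnit 1) = ((Bset j a).ncard : ℤ) := by
  rw [coeff_inv_qPoch, ncard_Bset]


theorem stmt12 (k : ℕ) (n : ℕ) :
    (partitionCount n : ℤ) = ∑ i ∈ Finset.range (n + 1), (PowerSeries.coeff (R := ℤ) n)
      ((PowerSeries.X : PowerSeries ℤ) ^ (i * (i + k)) *
        (qPoch (i + k)).invOfUnit 1 * (qPoch i).invOfUnit 1) := by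
  classical
  have hfin := aset_finite n
  have hstep1 : partitionCount n
      = ∑ i ∈ Finset.range (n+1), {l : List ℕ | IsPartitionOf n l ∧ durf k l = i}.ncard := by
    show {l : List ℕ | IsPartitionOf n l}.ncard = _
    rw [Set.ncard_eq_toFinset_card _ hfin]
    rw [Finset.card_eq_sum_card_fiberwise (f := durf k) (t := Finset.range (n+1))
      (fun l hl => by
        rw [Finset.mem_coe, Set.Finite.mem_toFinset] at hl
        rw [Finset.mem_coe, Finset.mem_range]
        have h1 : durf k l ≤ l.length := durf_le_length rfl
        have h2 := length_le_sum' l hl.2.1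
        have h3 := hl.2.2
        omega)]
    refine Finset.sum_congr rfl (fun i _ => ?_)
    have hset : ({l : List ℕ | IsPartitionOf n l ∧ durf k l = i})
        = ↑(hfin.toFinset.filter (fun l => durf k l = i)) := by
      ext l
      simp [Set.Finite.mem_toFinset]
    rw [hset, Set.ncard_coe_finset]
  have key : ∀ i ∈ Finset.range (n+1),
      ({l : List ℕ | IsPartitionOf n l ∧ durf k l = i}.ncard : ℤ)
        = (PowerSeries.coeff (R := ℤ) n) ((PowerSeries.X : PowerSeries ℤ) ^ (i * (i + k)) *
            (qPoch (i + k)).invOfUnit 1 * (qPoch i).invOfUnit 1) := by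
    intro i _
    rw [mul_assoc, PowerSeries.coeff_X_pow_mul']
    by_cases he : i * (i + k) ≤ n
    · rw [if_pos he, PowerSeries.coeff_mul]
      have hDfin : {l : List ℕ | IsPartitionOf n l ∧ durf k l = i}.Finite :=
        (aset_finite n).subset (fun l hl => hl.1)
      have hstep2 : {l : List ℕ | IsPartitionOf n l ∧ durf k l = i}.ncard
          = ∑ p ∈ Finset.HasAntidiagonal.antidiagonal (n - i * (i+k)), (Dab k n i p.1 p.2).ncard := by
        rw [Set.ncard_eq_toFinset_card _ hDfin]
        rw [Finset.card_eq_sum_card_fiberwise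
          (f := fun l => ((nuOf i l).sum, (muOf (i+k) i l).sum))
          (t := Finset.HasAntidiagonal.antidiagonal (n - i * (i+k)))
          (fun l hl => by
            rw [Finset.mem_coe, Set.Finite.mem_toFinset] at hl
            have := decomp_sum hl.1 hl.2
            simp only [Finset.mem_coe, Finset.HasAntidiagonal.mem_antidiagonal]
            omega)]
        refine Finset.sum_congr rfl (fun p _ => ?_)
        have hset : (Dab k n i p.1 p.2)
            = ↑(hDfin.toFinset.filter
                (fun l => ((nuOf i l).sum, (muOf (i+k) i l).sum) = p)) := by
          ext l
          simp only [Finset.coe_filter, Set.mem_setOf_eq, Set.Finite.mem_toFinset, Dab,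
            Prod.ext_iff]
          tauto
        rw [hset, Set.ncard_coe_finset]
      have hstep3 : ∀ p ∈ Finset.HasAntidiagonal.antidiagonal (n - i*(i+k)),
          ((Dab k n i p.1 p.2).ncard : ℤ)
            = ((Bset (i+k) p.1).ncard : ℤ) * ((Cset i p.2).ncard : ℤ) := by
        intro p hp
        rw [Finset.HasAntidiagonal.mem_antidiagonal] at hp
        have hbij := durf_bijOn k n i p.1 p.2 (by omega)
        rw [← hbij.image_eq, Set.ncard_image_of_injOn hbij.injOn]
        have hC : (Cset i p.2).Finite := (aset_finite p.2).subset (fun l hl => hl.1)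
        have hB : (Bset (i+k) p.1).Finite := (aset_finite p.1).subset (fun l hl => hl.1)
        rw [Set.ncard_eq_toFinset_card _ (hC.prod hB), ← Set.Finite.toFinset_prod (hs := hC) (ht := hB),
          Finset.card_product, ← Set.ncard_eq_toFinset_card _ hC,
          ← Set.ncard_eq_toFinset_card _ hB]
        push_cast
        ring
      rw [hstep2]
      push_cast
      refine Finset.sum_congr rfl (fun p hp => ?_)
      rw [hstep3 p hp, coeff_inv_eq_B (i+k) p.1, coeff_inv_eq_B i p.2,
        ncard_Bset_eq_ncard_Cset i p.2]
    · rw [if_neg he]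
      have hempty : {l : List ℕ | IsPartitionOf n l ∧ durf k l = i} = ∅ := by
        ext l
        simp only [Set.mem_setOf_eq, Set.mem_empty_iff_false, iff_false, not_and]
        intro hl hd
        have := decomp_sum hl hd
        omega
      rw [hempty]
      simp
  rw [hstep1]
  push_cast
  exact Finset.sum_congr rfl key
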